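/- If κ is a subtle cardinal, then for any club C ⊆ κ and any sequence ⟨A_α : α ∈ C⟩ with A_α ⊆ α, there exist inaccessible cardinals α < β, both in C, with A_α = A_β ∩ α. -/

import Mathlib

open Cardinal Set


/-- `C` is a club (closed unbounded set) in the ordinal `o`:
`C ⊆ o`, `C` is closed under limit points `< o`, and `C` is unbounded in `o`. -/
def IsClubIn (o : Ordinal.{0}) (C : Set Ordinal.{0}) : Prop :=
  C ⊆ Set.Iio o ∧
  (∀ δ < o, (∃ β ∈ C, β < δ) → (∀ β < δ, ∃ γ ∈ C, β < γ ∧ γ < δ) → δ ∈ C) ∧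
  (∀ β < o, ∃ γ ∈ C, β < γ)

/-- A cardinal `κ` is subtle if for every club `C ⊆ κ` and every sequence
`⟨A_α : α ∈ C⟩` with `A_α ⊆ α` for all `α ∈ C`, there are `α < β` in `C` with
`A_α = A_β ∩ α`. -/
def Subtle (κ : Cardinal.{0}) : Prop :=
  ∀ C : Set Ordinal, IsClubIn κ.ord C →
    ∀ A : Ordinal → Set Ordinal, (∀ α ∈ C, A α ⊆ Set.Iio α) →
      ∃ α ∈ C, ∃ β ∈ C, α < β ∧ A α = A β ∩ Set.Iio α

/-- An ordinal `α` is (the von Neumann ordinal of) a strongly inaccessible cardinal. -/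
def OrdInaccessible (α : Ordinal.{0}) : Prop :=
  α.card.ord = α ∧ α.card.IsInaccessible

namespace SubtleAux

/-- div/mod uniqueness for base-b coding. -/
lemma code_inj {b x y ξ η : Ordinal.{0}} (hb : b ≠ 0) (hξ : ξ < b) (hη : η < b)
    (h : b * x + ξ = b * y + η) : x = y ∧ ξ = η := by
  have hd : (b * x + ξ) / b = (b * y + η) / b := by rw [h]
  rw [Ordinal.mul_add_div _ hb, Ordinal.mul_add_div _ hb,
    Ordinal.div_eq_zero_of_lt hξ, Ordinal.div_eq_zero_of_lt hη, add_zero, add_zero] at hd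
  subst hd
  exact ⟨rfl, (add_right_inj (b * x)).1 h⟩

lemma res_ne {x y r s : Ordinal.{0}} (hr : r < 3) (hs : s < 3) (hrs : r ≠ s) :
    3 * x + r ≠ 3 * y + s := fun h => hrs (code_inj (by norm_num) hr hs h).2

/-- closure of infinite initial ordinals under `x*y+z`. -/
lemma closure {α x y z : Ordinal.{0}} (hinit : α.card.ord = α) (hω : ℵ₀ ≤ α.card)
    (hx : x < α) (hy : y < α) (hz : z < α) : x * y + z < α := by
  rw [← hinit] at hx hy hz ⊢
  rw [Cardinal.lt_ord] at hx hy hz ⊢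
  rw [Ordinal.card_add, Ordinal.card_mul]
  exact Cardinal.add_lt_of_lt hω (Cardinal.mul_lt_of_lt hω hx hy) hz

lemma nat_lt {α : Ordinal.{0}} (hinit : α.card.ord = α) (hω : ℵ₀ ≤ α.card) (n : ℕ) :
    (n : Ordinal) < α := by
  rw [← hinit, Cardinal.lt_ord, Ordinal.card_nat]
  exact lt_of_lt_of_le (Cardinal.nat_lt_aleph0 n) hω

/-- existence of a quasi-fundamental sequence indexed by ordinals below `γ.cof.ord`. -/
lemma exists_fseq (γ : Ordinal.{0}) : ∃ f : Ordinal.{0} → Ordinal.{0},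
    (∀ ξ < γ.cof.ord, f ξ < γ) ∧ ∀ b < γ, ∃ ξ < γ.cof.ord, b ≤ f ξ := by
  obtain ⟨ι, g, hg, hmk⟩ := Ordinal.exists_lsub_cof γ
  have hcard : #(Iio γ.cof.ord) = #(ULift.{1} ι) := by
    rw [Ordinal.mk_Iio_ordinal, Cardinal.card_ord, Cardinal.mk_uLift, hmk]
  obtain ⟨e⟩ := Cardinal.eq.1 hcard
  refine ⟨fun ξ => if h : ξ < γ.cof.ord then g (e ⟨ξ, h⟩).down else 0, fun ξ h => ?_, fun b hb => ?_⟩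
  · simp only [dif_pos h]
    have := Ordinal.lt_lsub g (e ⟨ξ, h⟩).down
    rwa [hg] at this
  · rw [← hg] at hb
    obtain ⟨i, hi⟩ := Ordinal.lt_lsub_iff.1 hb
    have hmem : ((e.symm ⟨i⟩ : Iio γ.cof.ord) : Ordinal) < γ.cof.ord := (e.symm ⟨i⟩).2
    refine ⟨_, hmem, ?_⟩
    dsimp only
    rw [dif_pos hmem]
    rw [show (⟨_, hmem⟩ : Iio γ.cof.ord) = e.symm ⟨i⟩ from rfl, Equiv.apply_symm_apply]
    exact hi

noncomputable def fseq (γ : Ordinal.{0}) : Ordinal.{0} → Ordinal.{0} :=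
  (exists_fseq γ).choose

lemma fseq_lt {γ ξ : Ordinal.{0}} (h : ξ < γ.cof.ord) : fseq γ ξ < γ :=
  (exists_fseq γ).choose_spec.1 ξ h

lemma fseq_cofinal {γ b : Ordinal.{0}} (h : b < γ) : ∃ ξ < γ.cof.ord, b ≤ fseq γ ξ :=
  (exists_fseq γ).choose_spec.2 b h

lemma subtle_isStrongLimit {κ : Cardinal.{0}} (hκ : ℵ₀ < κ) (h : Subtle κ) :
    κ.IsStrongLimit := by
  have hκ0 : κ ≠ 0 := fun h0 => by simp [h0] at hκ
  by_contra hSL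
  obtain ⟨μ, hμκ, hpow⟩ : ∃ μ < κ, κ ≤ 2 ^ μ := by
    by_contra hc; push_neg at hc
    exact hSL ⟨hκ0, hc⟩
  have hlim : Order.IsSuccLimit κ.ord := Cardinal.isSuccLimit_ord hκ.le
  have hμord : μ.ord < κ.ord := Cardinal.ord_lt_ord.2 hμκ
  set C : Set Ordinal.{0} := Set.Ioo μ.ord κ.ord with hC
  have hclub : IsClubIn κ.ord C := by
    refine ⟨fun x hx => hx.2, fun δ hδ hex _ => ?_, fun b hb => ?_⟩
    · obtain ⟨β, hβ, hβδ⟩ := hex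
      exact ⟨lt_trans hβ.1 hβδ, hδ⟩
    · refine ⟨Order.succ (max b μ.ord), ⟨?_, hlim.succ_lt (max_lt hb hμord)⟩, ?_⟩
      · exact lt_of_le_of_lt (le_max_right _ _) (Order.lt_succ _)
      · exact lt_of_le_of_lt (le_max_left _ _) (Order.lt_succ _)
  have hmkle : #(Iio κ.ord) ≤ #(Set (Iio μ.ord)) := by
    rw [Ordinal.mk_Iio_ordinal, Cardinal.mk_set, Ordinal.mk_Iio_ordinal, Cardinal.card_ord,
      Cardinal.card_ord]
    calc Cardinal.lift.{1} κ ≤ Cardinal.lift.{1} (2 ^ μ) := Cardinal.lift_le.2 hpow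
    _ = 2 ^ Cardinal.lift.{1} μ := by rw [Cardinal.lift_power, Cardinal.lift_two]
  obtain ⟨F⟩ := (Cardinal.le_def _ _).1 hmkle
  set A : Ordinal.{0} → Set Ordinal.{0} := fun γ =>
    if hγ : γ ∈ C then Subtype.val '' (F ⟨γ, hγ.2⟩) else ∅ with hA
  have hAsub : ∀ γ ∈ C, A γ ⊆ Set.Iio γ := by
    intro γ hγ z hz
    rw [hA] at hz
    simp only [dif_pos hγ] at hz
    obtain ⟨w, _, rfl⟩ := hz
    exact lt_trans w.2 hγ.1
  obtain ⟨α, hα, β, hβ, hαβ, heq⟩ := h C hclub A hAsub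
  have hAβ : A β ⊆ Set.Iio α := fun z hz => lt_trans (by
    have := hAsub β hβ
    exact (show z < μ.ord by
      rw [hA] at hz
      simp only [dif_pos hβ] at hz
      obtain ⟨w, _, rfl⟩ := hz
      exact w.2)) hα.1
  rw [Set.inter_eq_self_of_subset_left hAβ] at heq
  rw [hA] at heq
  simp only [dif_pos hα, dif_pos hβ] at heq
  have hFF := Set.image_injective.2 Subtype.val_injective heq
  have := F.injective hFF
  replace this := congrArg Subtype.val this
  exact absurd this hαβ.ne

lemma subtle_isRegular {κ : Cardinal.{0}} (hκ : ℵ₀ < κ) (h : Subtle κ) :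
    κ.IsRegular := by
  refine ⟨hκ.le, ?_⟩
  by_contra hc
  push_neg at hc
  have hlim : Order.IsSuccLimit κ.ord := Cardinal.isSuccLimit_ord hκ.le
  have hlaminf : ℵ₀ ≤ κ.ord.cof := Ordinal.aleph0_le_cof.2 hlim
  have hsucclt : Order.succ κ.ord.cof < κ := by
    rcases lt_or_eq_of_le (Order.succ_le_of_lt hc) with h' | h'
    · exact h'
    · exfalso
      have hreg := Cardinal.isRegular_succ hlaminf
      rw [h'] at hreg
      exact absurd hreg.2 (not_le.2 hc)
  set θ := (Order.succ κ.ord.cof).ord with hθ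
  have hθκ : θ < κ.ord := Cardinal.ord_lt_ord.2 hsucclt
  obtain ⟨ι, g, hg, hmk⟩ := Ordinal.exists_lsub_cof κ.ord
  have hglt : ∀ i, g i < κ.ord := fun i => hg ▸ Ordinal.lt_lsub g i
  have hgub : ∀ b < κ.ord, ∃ i, b ≤ g i := by
    intro b hb
    rw [← hg] at hb
    exact Ordinal.lt_lsub_iff.1 hb
  set S : Set Ordinal.{0} := Set.range g with hS
  set L : Ordinal.{0} → Prop := fun δ => ∀ b < δ, ∃ s ∈ S, b < s ∧ s < δ with hL
  set C : Set Ordinal.{0} := {δ | δ < κ.ord ∧ θ < δ ∧ (δ ∈ S ∨ L δ)} with hCdef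
  have hclub : IsClubIn κ.ord C := by
    refine ⟨fun x hx => hx.1, fun δ hδ hex hlimp => ?_, fun b hb => ?_⟩
    · obtain ⟨β, hβ, hβδ⟩ := hex
      refine ⟨hδ, lt_trans hβ.2.1 hβδ, Or.inr fun b hb => ?_⟩
      obtain ⟨γ, hγ, hbγ, hγδ⟩ := hlimp b hb
      rcases hγ.2.2 with hγS | hγL
      · exact ⟨γ, hγS, hbγ, hγδ⟩
      · obtain ⟨s, hsS, hbs, hsγ⟩ := hγL b hbγ
        exact ⟨s, hsS, hbs, lt_trans hsγ hγδ⟩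
    · obtain ⟨i, hi⟩ := hgub (Order.succ (max b θ)) (hlim.succ_lt (max_lt hb hθκ))
      refine ⟨g i, ⟨hglt i, ?_, Or.inl ⟨i, rfl⟩⟩, ?_⟩
      · exact lt_of_le_of_lt (le_max_right _ _) (lt_of_lt_of_le (Order.lt_succ _) hi)
      · exact lt_of_le_of_lt (le_max_left _ _) (lt_of_lt_of_le (Order.lt_succ _) hi)
  -- an injective labelling of C
  have hSmem : ∀ δ : Ordinal, δ < κ.ord → ({s | s ∈ S ∧ δ ≤ s}).Nonempty := by
    intro δ hδ
    obtain ⟨i, hi⟩ := hgub δ hδ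
    exact ⟨g i, ⟨i, rfl⟩, hi⟩
  classical
  set φ : ↥C → ↥S × Bool := fun δ =>
    if hδS : (δ : Ordinal) ∈ S then (⟨δ, hδS⟩, true)
    else (⟨sInf {s | s ∈ S ∧ (δ : Ordinal) ≤ s},
      (csInf_mem (hSmem δ δ.2.1)).1⟩, false) with hφ
  have key : ∀ x y : ↥C, (x : Ordinal) < (y : Ordinal) → (y : Ordinal) ∉ S →
      sInf {s | s ∈ S ∧ (x : Ordinal) ≤ s} ≠ sInf {s | s ∈ S ∧ (y : Ordinal) ≤ s} := by
    intro x y hxy hyS heq'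
    rcases y.2.2.2 with hyS' | hyL
    · exact absurd hyS' hyS
    · obtain ⟨s, hsS, h1, h2⟩ := hyL (x : Ordinal) hxy
      have hm1 : sInf {s | s ∈ S ∧ (x : Ordinal) ≤ s} ≤ s := csInf_le' ⟨hsS, h1.le⟩
      have hm2 : (y : Ordinal) ≤ sInf {s | s ∈ S ∧ (y : Ordinal) ≤ s} :=
        (csInf_mem (hSmem y y.2.1)).2
      rw [heq'] at hm1
      exact absurd (lt_of_le_of_lt (hm2.trans hm1) h2) (lt_irrefl _)
  have hφinj : Function.Injective φ := by
    intro a b hab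
    rw [hφ] at hab
    by_cases haS : (a : Ordinal) ∈ S <;> by_cases hbS : (b : Ordinal) ∈ S <;>
      simp only [dif_pos, dif_neg, haS, hbS] at hab
    · exact Subtype.ext (congrArg (fun p => (p.1 : Ordinal)) hab)
    · exact absurd (congrArg Prod.snd hab) (by simp)
    · exact absurd (congrArg Prod.snd hab) (by simp)
    · have hab' : sInf {s | s ∈ S ∧ (a : Ordinal) ≤ s} = sInf {s | s ∈ S ∧ (b : Ordinal) ≤ s} :=
        congrArg (fun p => (p.1 : Ordinal)) hab
      by_contra hne
      have hne' : (a : Ordinal) ≠ (b : Ordinal) := fun hh => hne (Subtype.ext hh)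
      rcases hne'.lt_or_gt with hlt | hlt
      · exact key a b hlt hbS hab'
      · exact key b a hlt haS hab'.symm
  have hmkC : #(↥C) ≤ #(↥(Iio θ)) := by
    have h1 : #(↥C) ≤ #(↥S × Bool) := Cardinal.mk_le_of_injective hφinj
    have h2 : #(↥S) ≤ Cardinal.lift.{1} κ.ord.cof := by
      rw [hS, ← hmk]
      have := Cardinal.mk_range_le_lift (f := g)
      rwa [Cardinal.lift_uzero] at this
    have hliftinf : ℵ₀ ≤ Cardinal.lift.{1} κ.ord.cof := by
      rw [← Cardinal.lift_aleph0.{1, 0}]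
      exact Cardinal.lift_le.2 hlaminf
    have h3 : #(↥S × Bool) ≤ Cardinal.lift.{1} κ.ord.cof := by
      rw [Cardinal.mk_prod, Cardinal.mk_bool, Cardinal.lift_two, Cardinal.lift_uzero]
      have h2two : (2 : Cardinal.{1}) ≤ Cardinal.lift.{1} κ.ord.cof := by
        refine le_trans ?_ hliftinf
        exact_mod_cast (Cardinal.nat_lt_aleph0 2).le
      calc #(↥S) * 2 ≤ Cardinal.lift.{1} κ.ord.cof * Cardinal.lift.{1} κ.ord.cof :=
            mul_le_mul' h2 h2two
      _ = Cardinal.lift.{1} κ.ord.cof := Cardinal.mul_eq_self hliftinf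
    rw [Ordinal.mk_Iio_ordinal, hθ, Cardinal.card_ord, Cardinal.lift_succ]
    exact (h1.trans h3).trans (Order.le_succ _)
  obtain ⟨j⟩ := (Cardinal.le_def _ _).1 hmkC
  set A : Ordinal.{0} → Set Ordinal.{0} := fun γ =>
    if hγ : γ ∈ C then {((j ⟨γ, hγ⟩ : ↥(Iio θ)) : Ordinal)} else ∅ with hA
  have hAsub : ∀ γ ∈ C, A γ ⊆ Set.Iio γ := by
    intro γ hγ z hz
    rw [hA] at hz
    simp only [dif_pos hγ, Set.mem_singleton_iff] at hz
    subst hz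
    exact lt_trans (j ⟨γ, hγ⟩).2 hγ.2.1
  obtain ⟨α, hα, β, hβ, hαβ, heq⟩ := h C hclub A hAsub
  rw [hA] at heq
  simp only [dif_pos hα, dif_pos hβ] at heq
  have hjβα : ((j ⟨β, hβ⟩ : ↥(Iio θ)) : Ordinal) ∈ Set.Iio α := lt_trans (j ⟨β, hβ⟩).2 hα.2.1
  rw [Set.inter_eq_self_of_subset_left (Set.singleton_subset_iff.2 hjβα)] at heq
  have := j.injective (Subtype.ext (Set.singleton_eq_singleton_iff.1 heq))
  replace this := congrArg Subtype.val this
  exact absurd this hαβ.ne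

lemma onat_lt {m n : ℕ} (h : m < n) : (m : Ordinal) < (n : Ordinal) := by exact_mod_cast h

lemma three_lt {α : Ordinal.{0}} (hinit : α.card.ord = α) (hω : ℵ₀ ≤ α.card) :
    (3 : Ordinal) < α := by exact_mod_cast nat_lt hinit hω 3

lemma two_lt {α : Ordinal.{0}} (hinit : α.card.ord = α) (hω : ℵ₀ ≤ α.card) :
    (2 : Ordinal) < α := by exact_mod_cast nat_lt hinit hω 2

lemma one_lt {α : Ordinal.{0}} (hinit : α.card.ord = α) (hω : ℵ₀ ≤ α.card) :
    (1 : Ordinal) < α := by exact_mod_cast nat_lt hinit hω 1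

lemma lt03 : (0 : Ordinal) < 3 := by exact_mod_cast (by norm_num : (0:ℕ) < 3)
lemma lt13 : (1 : Ordinal) < 3 := by exact_mod_cast (by norm_num : (1:ℕ) < 3)
lemma lt23 : (2 : Ordinal) < 3 := by exact_mod_cast (by norm_num : (2:ℕ) < 3)
lemma ne30 : (3 : Ordinal) ≠ 0 := by exact_mod_cast (by norm_num : (3:ℕ) ≠ 0)
lemma ne02 : (0 : Ordinal) ≠ 2 := by exact_mod_cast (by norm_num : (0:ℕ) ≠ 2)
lemma ne01 : (0 : Ordinal) ≠ 1 := by exact_mod_cast (by norm_num : (0:ℕ) ≠ 1)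
lemma ne12 : (1 : Ordinal) ≠ 2 := by exact_mod_cast (by norm_num : (1:ℕ) ≠ 2)

/-- The coding set: residue 0 codes `A γ`, residues 1,2 code a witness to singularity. -/
noncomputable def code (A : Ordinal.{0} → Set Ordinal.{0}) (γ : Ordinal.{0}) :
    Set Ordinal.{0} :=
  {z | (∃ ξ ∈ A γ, z = 3 * ξ) ∨
    (γ.cof.ord < γ ∧ (z = 2 ∨ z = 3 * γ.cof.ord + 2 ∨
      ∃ ξ < γ.cof.ord, z = 3 * (γ.cof.ord * fseq γ ξ + ξ) + 1))}

lemma mem_code {A : Ordinal.{0} → Set Ordinal.{0}} {γ z : Ordinal.{0}} :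
    z ∈ code A γ ↔ ((∃ ξ ∈ A γ, z = 3 * ξ) ∨
      (γ.cof.ord < γ ∧ (z = 2 ∨ z = 3 * γ.cof.ord + 2 ∨
        ∃ ξ < γ.cof.ord, z = 3 * (γ.cof.ord * fseq γ ξ + ξ) + 1))) := Iff.rfl

theorem main {κ : Cardinal.{0}} (hκ : ℵ₀ < κ) (h : Subtle κ) :
    ∀ C : Set Ordinal.{0}, IsClubIn κ.ord C →
      ∀ A : Ordinal.{0} → Set Ordinal.{0}, (∀ α ∈ C, A α ⊆ Set.Iio α) →
        ∃ α ∈ C, ∃ β ∈ C, α < β ∧ OrdInaccessible α ∧ OrdInaccessible β ∧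
          A α = A β ∩ Set.Iio α := by
  intro C hC A hA
  have hSL := subtle_isStrongLimit hκ h
  have hReg := subtle_isRegular hκ h
  have hlim : Order.IsSuccLimit κ.ord := Cardinal.isSuccLimit_ord hκ.le
  have hcof : κ.ord.cof = κ :=
    le_antisymm (by simpa [Cardinal.card_ord] using Ordinal.cof_le_card κ.ord) hReg.2
  set D : Set Ordinal.{0} :=
    C ∩ {γ | ℵ₀ < γ.card ∧ γ.card.ord = γ ∧ γ.card.IsStrongLimit} with hDdef
  have hDclub : IsClubIn κ.ord D := by
    refine ⟨fun x hx => hC.1 hx.1, ?_, ?_⟩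
    · -- closed
      intro δ hδ hex hlimp
      obtain ⟨β₀, hβ₀, hβ₀δ⟩ := hex
      have hδC : δ ∈ C := hC.2.1 δ hδ ⟨β₀, hβ₀.1, hβ₀δ⟩
        (fun b hb => let ⟨γ, hγ, h1, h2⟩ := hlimp b hb; ⟨γ, hγ.1, h1, h2⟩)
      have hδω : ℵ₀ < δ.card :=
        lt_of_lt_of_le hβ₀.2.1 (Ordinal.card_le_card hβ₀δ.le)
      have hstep : ∀ b < δ, b.card < δ.card := by
        intro b hb
        obtain ⟨γ, hγ, hbγ, hγδ⟩ := hlimp b hb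
        have h1 : b.card < γ.card := Cardinal.lt_ord.1 (by rw [hγ.2.2.1]; exact hbγ)
        exact lt_of_lt_of_le h1 (Ordinal.card_le_card hγδ.le)
      have hinit : δ.card.ord = δ := by
        refine le_antisymm (Cardinal.ord_card_le δ) ?_
        by_contra hcon
        push_neg at hcon
        exact absurd (Cardinal.lt_ord.2 (hstep _ hcon)) (lt_irrefl _)
      refine ⟨hδC, hδω, hinit, ⟨?_, ?_⟩⟩
      · exact fun h0 => by simp [h0] at hδω
      · intro y hy
        have hyδ : y.ord < δ := by rw [← hinit]; exact Cardinal.ord_lt_ord.2 hy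
        obtain ⟨γ, hγ, hbγ, hγδ⟩ := hlimp y.ord hyδ
        have h1 : y < γ.card := by
          have := Cardinal.lt_ord.1 (show y.ord < γ.card.ord by rw [hγ.2.2.1]; exact hbγ)
          rwa [Cardinal.card_ord] at this
        exact lt_of_lt_of_le (hγ.2.2.2.two_power_lt h1) (Ordinal.card_le_card hγδ.le)
    · -- unbounded
      intro b hb
      have hstep : ∀ γ, γ < κ.ord →
          ∃ y, (y ∈ C ∧ γ < y ∧ ((2:Cardinal) ^ γ.card).ord < y) ∧ y < κ.ord := by
        intro γ hγ
        have hγκ : γ.card < κ := Cardinal.lt_ord.1 hγ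
        have h2 : ((2:Cardinal) ^ γ.card).ord < κ.ord := Cardinal.ord_lt_ord.2 (hSL.two_power_lt hγκ)
        obtain ⟨y, hyC, hy⟩ := hC.2.2 (max γ ((2:Cardinal) ^ γ.card).ord) (max_lt hγ h2)
        exact ⟨y, ⟨hyC, (le_max_left _ _).trans_lt hy, (le_max_right _ _).trans_lt hy⟩,
          hC.1 hyC⟩
      classical
      set F : Ordinal.{0} → Ordinal.{0} :=
        fun γ => if hγ : γ < κ.ord then (hstep γ hγ).choose else 0 with hF
      have hFspec : ∀ γ, γ < κ.ord →
          (F γ ∈ C ∧ γ < F γ ∧ ((2:Cardinal) ^ γ.card).ord < F γ) ∧ F γ < κ.ord := by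
        intro γ hγ
        rw [hF]
        simp only [dif_pos hγ]
        exact (hstep γ hγ).choose_spec
      have hωκ : Ordinal.omega0 < κ.ord := Cardinal.omega0_lt_ord.2 hκ
      have hbase : max b Ordinal.omega0 < κ.ord := max_lt hb hωκ
      set x : ℕ → Ordinal.{0} :=
        fun n => Nat.rec (F (max b Ordinal.omega0)) (fun _ ih => F ih) n with hx
      have hxlt : ∀ n, x n < κ.ord := by
        intro n
        induction n with
        | zero => exact (hFspec _ hbase).2
        | succ n ih => exact (hFspec _ ih).2
      have hxC : ∀ n, x n ∈ C := by
        intro n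
        cases n with
        | zero => exact (hFspec _ hbase).1.1
        | succ n => exact (hFspec _ (hxlt n)).1.1
      have hxmono : ∀ n, x n < x (n + 1) := fun n => (hFspec _ (hxlt n)).1.2.1
      have hxpow : ∀ n, ((2:Cardinal) ^ (x n).card).ord < x (n + 1) := fun n => (hFspec _ (hxlt n)).1.2.2
      set δ : Ordinal.{0} := ⨆ n, x n with hδ
      have hxle : ∀ n, x n ≤ δ := Ordinal.le_iSup x
      have hxltδ : ∀ n, x n < δ := fun n => (hxmono n).trans_le (hxle (n + 1))
      have hδκ : δ < κ.ord := by
        refine Ordinal.iSup_lt_ord ?_ hxlt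
        rw [Cardinal.mk_nat, hcof]
        exact hκ
      have hbound : ∀ b' < δ, ∃ n, b' < x n := by
        intro b' hb'
        by_contra hcon
        push_neg at hcon
        exact absurd (Ordinal.iSup_le hcon) (not_le.2 hb')
      have hδC : δ ∈ C := hC.2.1 δ hδκ ⟨x 0, hxC 0, hxltδ 0⟩
        (fun b' hb' => let ⟨n, hn⟩ := hbound b' hb'; ⟨x n, hxC n, hn, hxltδ n⟩)
      have h2c : ∀ n, (2 : Cardinal) ^ (x n).card ≤ (x (n + 1)).card := by
        intro n
        have := Ordinal.card_le_card (hxpow n).le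
        rwa [Cardinal.card_ord] at this
      have hcard0 : ℵ₀ ≤ (x 0).card := by
        have h1 : Ordinal.omega0 ≤ x 0 := (le_max_right b _).trans (hFspec _ hbase).1.2.1.le
        have h2 := Ordinal.card_le_card h1
        rwa [Ordinal.card_omega0] at h2
      have hcards : ∀ n, (x n).card ≤ δ.card := fun n => Ordinal.card_le_card (hxle n)
      have hδω : ℵ₀ < δ.card :=
        lt_of_le_of_lt hcard0 (lt_of_lt_of_le (Cardinal.cantor _) ((h2c 0).trans (hcards 1)))
      have hstepcard : ∀ b' < δ, b'.card < δ.card := by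
        intro b' hb'
        obtain ⟨n, hn⟩ := hbound b' hb'
        exact lt_of_le_of_lt (Ordinal.card_le_card hn.le)
          (lt_of_lt_of_le (Cardinal.cantor _) ((h2c n).trans (hcards (n + 1))))
      have hinit : δ.card.ord = δ := by
        refine le_antisymm (Cardinal.ord_card_le δ) ?_
        by_contra hcon
        push_neg at hcon
        exact absurd (Cardinal.lt_ord.2 (hstepcard _ hcon)) (lt_irrefl _)
      refine ⟨δ, ⟨hδC, hδω, hinit, ⟨fun h0 => by simp [h0] at hδω, ?_⟩⟩, ?_⟩
      · intro c hc
        have hcδ : c.ord < δ := by rw [← hinit]; exact Cardinal.ord_lt_ord.2 hc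
        obtain ⟨n, hn⟩ := hbound c.ord hcδ
        have h1 : c ≤ (x n).card := by
          have := Ordinal.card_le_card hn.le
          rwa [Cardinal.card_ord] at this
        calc (2 : Cardinal) ^ c ≤ 2 ^ (x n).card :=
              Cardinal.power_le_power_left (by norm_num) h1
        _ ≤ (x (n + 1)).card := h2c n
        _ < 2 ^ (x (n + 1)).card := Cardinal.cantor _
        _ ≤ (x (n + 2)).card := h2c (n + 1)
        _ ≤ δ.card := hcards (n + 2)
      · exact (le_max_left b _).trans_lt ((hFspec _ hbase).1.2.1.trans (hxltδ 0))
  -- apply subtlety to the coding sequence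
  have hcode_sub : ∀ γ ∈ D, code A γ ⊆ Set.Iio γ := by
    intro γ hγ z hz
    have hγC := hγ.1
    have hγinit := hγ.2.2.1
    have hωle : ℵ₀ ≤ γ.card := hγ.2.1.le
    rcases mem_code.1 hz with ⟨ξ, hξ, rfl⟩ | ⟨hsing, hz2⟩
    · have h3 := closure hγinit hωle (three_lt hγinit hωle) (hA γ hγC hξ)
        (zero_lt_one.trans (one_lt hγinit hωle))
      simpa using h3
    · rcases hz2 with rfl | rfl | ⟨ξ, hξ, rfl⟩
      · exact two_lt hγinit hωle
      · exact closure hγinit hωle (three_lt hγinit hωle) hsing (two_lt hγinit hωle)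
      · have hinner : γ.cof.ord * fseq γ ξ + ξ < γ :=
          closure hγinit hωle hsing (fseq_lt hξ) (hξ.trans hsing)
        exact closure hγinit hωle (three_lt hγinit hωle) hinner (one_lt hγinit hωle)
  obtain ⟨α, hαD, β, hβD, hαβ, hcode⟩ := h D hDclub (code A) hcode_sub
  have hαC := hαD.1
  have hαinit := hαD.2.2.1
  have hωα : ℵ₀ ≤ α.card := hαD.2.1.le
  have hβC := hβD.1
  have hβinit := hβD.2.2.1
  have hωβ : ℵ₀ ≤ β.card := hβD.2.1.le
  have hdir1 : ∀ z ∈ code A α, z ∈ code A β := by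
    intro z hz
    rw [hcode] at hz
    exact hz.1
  have hdir2 : ∀ z, z < α → z ∈ code A β → z ∈ code A α := by
    intro z h1 h2
    rw [hcode]
    exact ⟨h2, h1⟩
  have hregα : ¬ α.cof.ord < α := by
    intro hs
    have h2α : (2 : Ordinal) ∈ code A α := mem_code.2 (Or.inr ⟨hs, Or.inl rfl⟩)
    have h2β := hdir1 _ h2α
    have hsβ : β.cof.ord < β := by
      rcases mem_code.1 h2β with ⟨ξ, _, hξ⟩ | ⟨hsing, _⟩
      · exact absurd (show (3:Ordinal) * 0 + 2 = 3 * ξ + 0 by simpa using hξ)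
          (res_ne lt23 lt03 (Ne.symm ne02))
      · exact hsing
    have hcof0 : α.cof.ord ≠ 0 := by
      intro h0
      have h00 : α.cof = 0 := by rwa [Cardinal.ord_eq_zero] at h0
      rw [Ordinal.cof_eq_zero] at h00
      rw [h00] at hs
      exact absurd hs (not_lt_of_ge zero_le)
    have hcofeq : β.cof.ord = α.cof.ord := by
      have hzα : (3 * α.cof.ord + 2 : Ordinal) ∈ code A α :=
        mem_code.2 (Or.inr ⟨hs, Or.inr (Or.inl rfl)⟩)
      have hzβ := hdir1 _ hzα
      rcases mem_code.1 hzβ with ⟨ξ, _, hξ⟩ | ⟨_, hz2⟩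
      · exact absurd (show (3:Ordinal) * α.cof.ord + 2 = 3 * ξ + 0 by simpa using hξ)
          (res_ne lt23 lt03 (Ne.symm ne02))
      · rcases hz2 with h1 | h1 | ⟨ξ, _, h1⟩
        · obtain ⟨hx, -⟩ := code_inj ne30 lt23 lt23
            (show (3:Ordinal) * α.cof.ord + 2 = 3 * 0 + 2 by simpa using h1)
          exact absurd hx hcof0
        · obtain ⟨hx, -⟩ := code_inj ne30 lt23 lt23 h1
          exact hx.symm
        · exact absurd h1 (res_ne lt23 lt13 (Ne.symm ne12))
    have hfb : ∀ ξ, ξ < α.cof.ord → fseq β ξ < α := by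
      intro ξ hξ
      have hfαlt : fseq α ξ < α := fseq_lt hξ
      have hzα : (3 * (α.cof.ord * fseq α ξ + ξ) + 1 : Ordinal) ∈ code A α :=
        mem_code.2 (Or.inr ⟨hs, Or.inr (Or.inr ⟨ξ, hξ, rfl⟩)⟩)
      have hzβ := hdir1 _ hzα
      rcases mem_code.1 hzβ with ⟨η, _, hη⟩ | ⟨_, hz2⟩
      · exact absurd (show (3:Ordinal) * (α.cof.ord * fseq α ξ + ξ) + 1 = 3 * η + 0
            by simpa using hη) (res_ne lt13 lt03 (Ne.symm ne01))
      · rcases hz2 with h1 | h1 | ⟨η, hηlt, h1⟩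
        · exact absurd (show (3:Ordinal) * (α.cof.ord * fseq α ξ + ξ) + 1 = 3 * 0 + 2
              by simpa using h1) (res_ne lt13 lt23 ne12)
        · exact absurd h1 (res_ne lt13 lt23 ne12)
        · obtain ⟨hx, -⟩ := code_inj ne30 lt13 lt13 h1
          rw [hcofeq] at hηlt hx
          obtain ⟨hf, hxy⟩ := code_inj hcof0 hξ hηlt hx
          rw [hxy, ← hf]
          exact hfαlt
    obtain ⟨ξ, hξlt, hξge⟩ := fseq_cofinal (show α < β from hαβ)
    rw [hcofeq] at hξlt
    exact absurd (lt_of_le_of_lt hξge (hfb ξ hξlt)) (lt_irrefl _)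
  have hregβ : ¬ β.cof.ord < β := by
    intro hs
    have h2β : (2 : Ordinal) ∈ code A β := mem_code.2 (Or.inr ⟨hs, Or.inl rfl⟩)
    have h2α := hdir2 _ (two_lt hαinit hωα) h2β
    rcases mem_code.1 h2α with ⟨ξ, _, hξ⟩ | ⟨hsing, _⟩
    · exact absurd (show (3:Ordinal) * 0 + 2 = 3 * ξ + 0 by simpa using hξ)
        (res_ne lt23 lt03 (Ne.symm ne02))
    · exact hregα hsing
  have hAeq : A α = A β ∩ Set.Iio α := by
    ext ξ
    constructor
    · intro hξ
      have hξα : ξ < α := hA α hαC hξ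
      have hz := hdir1 _ (mem_code.2 (Or.inl ⟨ξ, hξ, rfl⟩))
      rcases mem_code.1 hz with ⟨η, hη, hη'⟩ | ⟨hsing, _⟩
      · obtain ⟨hx, -⟩ := code_inj ne30 lt03 lt03
          (show (3:Ordinal) * ξ + 0 = 3 * η + 0 by simpa using hη')
        exact ⟨by rw [hx]; exact hη, hξα⟩
      · exact absurd hsing hregβ
    · rintro ⟨hξβ, hξα⟩
      have hzlt : (3:Ordinal) * ξ < α := by
        have h3 := closure hαinit hωα (three_lt hαinit hωα) hξα
          (zero_lt_one.trans (one_lt hαinit hωα))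
        simpa using h3
      have hz := hdir2 _ hzlt (mem_code.2 (Or.inl ⟨ξ, hξβ, rfl⟩))
      rcases mem_code.1 hz with ⟨η, hη, hη'⟩ | ⟨hsing, _⟩
      · obtain ⟨hx, -⟩ := code_inj ne30 lt03 lt03
          (show (3:Ordinal) * ξ + 0 = 3 * η + 0 by simpa using hη')
        exact (by rw [hx]; exact hη)
      · exact absurd hsing hregα
  have hinacc : ∀ γ ∈ D, ¬ γ.cof.ord < γ → OrdInaccessible γ := by
    intro γ hγ hreg
    have hγinit := hγ.2.2.1
    have hcofeq2 : γ.cof.ord = γ := le_antisymm (Ordinal.ord_cof_le γ) (not_lt.1 hreg)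
    have hcofcard : γ.cof = γ.card := Cardinal.ord_injective (by rw [hcofeq2, hγinit])
    refine ⟨hγinit, hγ.2.1, ?_, hγ.2.2.2.isStrongPrelimit⟩
    rw [hγinit, hcofcard]
  exact ⟨α, hαD.1, β, hβD.1, hαβ, hinacc α hαD hregα, hinacc β hβD hregβ, hAeq⟩

end SubtleAux

/-- If `κ` is subtle, then for any club `C ⊆ κ` and any sequence `⟨A_α : α ∈ C⟩`
with `A_α ⊆ α`, there are inaccessible `α < β`, both in `C`, with `A_α = A_β ∩ α`. -/

theorem stmt3 (κ : Cardinal.{0}) (hκ : Cardinal.aleph0 < κ) (h : Subtle κ) :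
    ∀ C : Set Ordinal, IsClubIn κ.ord C →
      ∀ A : Ordinal → Set Ordinal, (∀ α ∈ C, A α ⊆ Set.Iio α) →
        ∃ α ∈ C, ∃ β ∈ C, α < β ∧ OrdInaccessible α ∧ OrdInaccessible β ∧
          A α = A β ∩ Set.Iio α :=
  SubtleAux.main hκ h
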